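/- Let F be a decomposable NNF over n Boolean variables. Define sat(F) ∈ Bool recursively: sat of a literal leaf is true; sat of an And node is the conjunction of the sat-values of its children; sat of an Or node is the disjunction of the sat-values of its children. Then F is satisfiable, i.e., there exists x : Fin n → Bool with eval F x = true, if and only if sat(F) = true. -/

import Mathlib

/-- A negation normal form circuit (NNF) over `n` Boolean variables: a leaf is
a literal `(i, b)`; internal nodes are And or Or nodes with a finite list of
children. -/
inductive NNF (n : ℕ) where
  | lit : Fin n → Bool → NNF n
  | and : List (NNF n) → NNF n
  | or : List (NNF n) → NNF n

namespace NNF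

variable {n : ℕ}

/-- Evaluation of an NNF at an assignment: a literal `(i, b)` evaluates to the
Boolean `x i = b`, an And node to the conjunction of its children's values, and
an Or node to the disjunction of its children's values. -/
def eval : NNF n → (Fin n → Bool) → Bool
  | .lit i b, x => x i == b
  | .and l, x => l.attach.all fun c => c.1.eval x
  | .or l, x => l.attach.any fun c => c.1.eval x
decreasing_by all_goals (simp_wf; have := List.sizeOf_lt_of_mem c.2; omega)

/-- The scope of an NNF: the set of variable indices appearing in its literals. -/
def scope : NNF n → Finset (Fin n)
  | .lit i _ => {i}
  | .and l => (l.attach.map fun c => c.1.scope).foldr (· ∪ ·) ∅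
  | .or l => (l.attach.map fun c => c.1.scope).foldr (· ∪ ·) ∅
decreasing_by all_goals (simp_wf; have := List.sizeOf_lt_of_mem c.2; omega)

/-- An NNF is decomposable iff the children of every And node have pairwise
disjoint scopes. -/
inductive Decomposable : NNF n → Prop
  | lit (i : Fin n) (b : Bool) : Decomposable (.lit i b)
  | and {l : List (NNF n)} :
      (∀ G ∈ l, Decomposable G) →
      l.Pairwise (fun G H => Disjoint G.scope H.scope) →
      Decomposable (.and l)
  | or {l : List (NNF n)} :
      (∀ G ∈ l, Decomposable G) → Decomposable (.or l)

/-- The bottom-up pass `sat` (summation in the Boolean semiring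
`(𝔹, ∨, ∧, 0, 1)`): `sat` of a literal leaf is `true`, of an And node the
conjunction of its children's values, of an Or node the disjunction of its
children's values. -/
def sat : NNF n → Bool
  | .lit _ _ => true
  | .and l => l.attach.all fun c => c.1.sat
  | .or l => l.attach.any fun c => c.1.sat
decreasing_by all_goals (simp_wf; have := List.sizeOf_lt_of_mem c.2; omega)

end NNF

namespace NNF

variable {n : ℕ}

lemma mem_foldr_union {α} [DecidableEq α] (s : List (Finset α)) (i : α) :
    i ∈ s.foldr (· ∪ ·) ∅ ↔ ∃ t ∈ s, i ∈ t := by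
  induction s with
  | nil => simp
  | cons a s ih => simp [ih]

lemma mem_scope_and {l : List (NNF n)} {i : Fin n} :
    i ∈ (NNF.and l).scope ↔ ∃ G ∈ l, i ∈ G.scope := by
  rw [scope, mem_foldr_union]
  simp

theorem eval_congr : ∀ (F : NNF n) (x y : Fin n → Bool),
    (∀ i ∈ F.scope, x i = y i) → F.eval x = F.eval y
  | .lit i b, x, y, h => by
    simp only [scope, Finset.mem_singleton] at h
    simp [eval, h i rfl]
  | .and l, x, y, h => by
    simp only [eval]
    rw [Bool.eq_iff_iff]
    simp only [List.all_eq_true]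
    constructor <;> intro hall c hc <;>
      [rw [← eval_congr c.1 x y]; rw [eval_congr c.1 x y]] <;>
      first
        | exact hall c hc
        | exact fun i hi => h i (mem_scope_and.2 ⟨c.1, c.2, hi⟩)
  | .or l, x, y, h => by
    simp only [eval]
    rw [Bool.eq_iff_iff]
    simp only [List.any_eq_true]
    constructor <;> rintro ⟨c, hc, hce⟩ <;> refine ⟨c, hc, ?_⟩ <;>
      [rw [← eval_congr c.1 x y]; rw [eval_congr c.1 x y]] <;>
      first
        | exact hce
        | exact fun i hi => h i (by rw [scope, mem_foldr_union]; simpa using ⟨c.1, c.2, hi⟩)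
decreasing_by all_goals (simp_wf; have := List.sizeOf_lt_of_mem c.2; omega)

theorem eval_to_sat : ∀ (F : NNF n) (x : Fin n → Bool), F.eval x = true → F.sat = true
  | .lit _ _, _, _ => by simp [sat]
  | .and l, x, h => by
    simp only [eval, List.all_eq_true] at h
    simp only [sat, List.all_eq_true]
    exact fun c hc => eval_to_sat c.1 x (h c hc)
  | .or l, x, h => by
    simp only [eval, List.any_eq_true] at h
    simp only [sat, List.any_eq_true]
    obtain ⟨c, hc, hce⟩ := h
    exact ⟨c, hc, eval_to_sat c.1 x hce⟩
decreasing_by all_goals (simp_wf; have := List.sizeOf_lt_of_mem c.2; omega)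

lemma combine (l : List (NNF n))
    (hp : l.Pairwise (fun G H => Disjoint G.scope H.scope))
    (hw : ∀ G ∈ l, ∃ x, G.eval x = true) :
    ∃ x, ∀ G ∈ l, G.eval x = true := by
  induction l with
  | nil => exact ⟨fun _ => false, by simp⟩
  | cons G l ih =>
    obtain ⟨hd, hp⟩ := List.pairwise_cons.1 hp
    obtain ⟨y, hy⟩ := ih hp fun H hH => hw H (List.mem_cons_of_mem _ hH)
    obtain ⟨z, hz⟩ := hw G List.mem_cons_self
    refine ⟨fun i => if i ∈ G.scope then z i else y i, ?_⟩
    intro H hH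
    rcases List.mem_cons.1 hH with rfl | hH
    · rw [eval_congr H _ z]
      · exact hz
      · intro i hi; simp [hi]
    · rw [eval_congr H _ y]
      · exact hy H hH
      · intro i hi
        have : i ∉ G.scope := fun hG => Finset.disjoint_left.1 (hd H hH) hG hi
        simp [this]

theorem sat_to_exists : ∀ (F : NNF n), F.Decomposable → F.sat = true →
    ∃ x : Fin n → Bool, F.eval x = true
  | .lit i b, _, _ => ⟨fun _ => b, by simp [eval]⟩
  | .and l, hdec, hs => by
    cases hdec with
    | and hd hp =>
      simp only [sat, List.all_eq_true] at hs
      have hw : ∀ G ∈ l, ∃ x, G.eval x = true := fun G hG =>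
        sat_to_exists G (hd G hG) (hs ⟨G, hG⟩ (List.mem_attach _ _))
      obtain ⟨x, hx⟩ := combine l hp hw
      refine ⟨x, ?_⟩
      simp only [eval, List.all_eq_true]
      exact fun c _ => hx c.1 c.2
  | .or l, hdec, hs => by
    cases hdec with
    | or hd =>
      simp only [sat, List.any_eq_true] at hs
      obtain ⟨c, _, hcs⟩ := hs
      obtain ⟨x, hx⟩ := sat_to_exists c.1 (hd c.1 c.2) hcs
      refine ⟨x, ?_⟩
      simp only [eval, List.any_eq_true]
      exact ⟨c, List.mem_attach _ _, hx⟩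
decreasing_by
  all_goals simp_wf
  · have := List.sizeOf_lt_of_mem hG; omega
  · have := List.sizeOf_lt_of_mem c.2; omega

end NNF

/-- Corollary 3: a decomposable NNF is satisfiable if and only if the
linear-time bottom-up pass `sat` returns `true`. -/
theorem decomposable_nnf_satisfiable_iff_sat
    {n : ℕ} (F : NNF n) (hdec : F.Decomposable) :
    (∃ x : Fin n → Bool, F.eval x = true) ↔ F.sat = true :=
  ⟨fun ⟨x, hx⟩ => NNF.eval_to_sat F x hx, NNF.sat_to_exists F hdec⟩
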